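/- For all k > 0 and q > 0, ∫₀^{2π} (1 − cos²φ) / (k² + q² − 2kq·cos φ) dφ = π / (max(k, q))². Equivalently, the integral equals π/q² when q ≥ k and π/k² when k ≥ q. -/

import Mathlib

open Real


lemma main_integral (k q : ℝ) (hq : 0 < q) (hqk : q < k) :
    ∫ φ in (0:ℝ)..(2*π),
        (1 - Real.cos φ ^ 2) / (k ^ 2 + q ^ 2 - 2 * k * q * Real.cos φ) = π / k ^ 2 := by
  have hk : 0 < k := hq.trans hqk
  have hden2 : ∀ φ : ℝ, 0 < k - q * Real.cos φ := by
    intro φ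
    have : q * Real.cos φ ≤ q := by
      nlinarith [Real.cos_le_one φ]
    linarith
  have hden : ∀ φ : ℝ, 0 < k ^ 2 + q ^ 2 - 2 * k * q * Real.cos φ := by
    intro φ
    nlinarith [Real.cos_le_one φ, sq_nonneg (k - q), mul_pos hk hq]
  set F : ℝ → ℝ := fun φ =>
    ((k^2+q^2)*φ + 2*k*q*Real.sin φ
      - (k^2-q^2)*(φ + 2*Real.arctan (q*Real.sin φ/(k - q*Real.cos φ))))/(2*k*q)^2 with hF
  have hderiv : ∀ φ : ℝ, HasDerivAt F
      ((1 - Real.cos φ ^ 2) / (k ^ 2 + q ^ 2 - 2 * k * q * Real.cos φ)) φ := by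
    intro φ
    have h1 : HasDerivAt (fun x => q * Real.sin x) (q * Real.cos φ) φ :=
      (Real.hasDerivAt_sin φ).const_mul q
    have h2 : HasDerivAt (fun x => k - q * Real.cos x) (-(q * (-Real.sin φ))) φ :=
      ((Real.hasDerivAt_cos φ).const_mul q).const_sub k
    have h3 := (h1.div h2 (hden2 φ).ne')
    have h4 := h3.arctan
    have h5 := ((((hasDerivAt_id φ).const_mul (k^2+q^2)).add
        ((Real.hasDerivAt_sin φ).const_mul (2*k*q))).sub
        (((hasDerivAt_id φ).add (h4.const_mul 2)).const_mul (k^2-q^2)))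
    have h6 := h5.div_const ((2*k*q)^2)
    refine h6.congr_deriv ?_
    symm
    simp only [Pi.div_apply]
    have e1 : (k - q * Real.cos φ) ≠ 0 := (hden2 φ).ne'
    have e2 : (k ^ 2 + q ^ 2 - 2 * k * q * Real.cos φ) ≠ 0 := (hden φ).ne'
    have e3 : 1 + (q * Real.sin φ / (k - q * Real.cos φ)) ^ 2
        = (k ^ 2 + q ^ 2 - 2 * k * q * Real.cos φ) / (k - q * Real.cos φ) ^ 2 := by
      field_simp
      nlinarith [Real.sin_sq_add_cos_sq φ]
    rw [e3]
    have hs : q * Real.sin φ * -(q * -Real.sin φ) = q^2 * (1 - Real.cos φ ^ 2) := by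
      have := Real.sin_sq φ; nlinarith [this]
    rw [hs]
    rw [one_div_div, div_mul_div_comm, mul_comm ((k - q * Real.cos φ) ^ 2), mul_div_mul_right _ _ (pow_ne_zero 2 e1)]
    rw [mul_div_assoc', one_add_div e2, mul_div_assoc', sub_div' e2, div_div, div_eq_div_iff e2 (by positivity)]
    ring
  have hint : IntervalIntegrable
      (fun φ => (1 - Real.cos φ ^ 2) / (k ^ 2 + q ^ 2 - 2 * k * q * Real.cos φ))
      MeasureTheory.volume 0 (2*π) := by
    apply Continuous.intervalIntegrable
    exact (continuous_const.sub (Real.continuous_cos.pow 2)).div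
      (by continuity) (fun φ => (hden φ).ne')
  rw [intervalIntegral.integral_eq_sub_of_hasDerivAt (fun φ _ => hderiv φ) hint]
  simp only [hF, Real.sin_two_pi, Real.sin_zero, Real.cos_zero, mul_zero, zero_div,
    Real.arctan_zero, mul_one]
  field_simp
  ring

lemma eq_case (k : ℝ) (hk : 0 < k) :
    ∫ φ in (0:ℝ)..(2*π),
        (1 - Real.cos φ ^ 2) / (k ^ 2 + k ^ 2 - 2 * k * k * Real.cos φ) = π / k ^ 2 := by
  have hmeas : (MeasureTheory.volume {x : ℝ | Real.cos x = 1}) = 0 := by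
    have hsub : {x : ℝ | Real.cos x = 1} ⊆ Set.range (fun n : ℤ => (n : ℝ) * (2 * π)) := by
      intro x hx
      rcases (Real.cos_eq_one_iff x).mp hx with ⟨n, hn⟩
      exact ⟨n, hn⟩
    exact MeasureTheory.measure_mono_null hsub (Set.Countable.measure_zero (Set.countable_range _) _)
  have hcongr : ∫ φ in (0:ℝ)..(2*π),
        (1 - Real.cos φ ^ 2) / (k ^ 2 + k ^ 2 - 2 * k * k * Real.cos φ)
      = ∫ φ in (0:ℝ)..(2*π), (1 + Real.cos φ) / (2 * k ^ 2) := by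
    apply intervalIntegral.integral_congr_ae
    have hae : ∀ᵐ x : ℝ, Real.cos x ≠ 1 := by
      rw [MeasureTheory.ae_iff]
      simp only [ne_eq, not_not]
      exact hmeas
    filter_upwards [hae] with x hc _
    have h1 : Real.cos x < 1 := lt_of_le_of_ne (Real.cos_le_one x) hc
    have hd : k ^ 2 + k ^ 2 - 2 * k * k * Real.cos x = 2 * k ^ 2 * (1 - Real.cos x) := by ring
    have hp : (0:ℝ) < 2 * k ^ 2 * (1 - Real.cos x) := by
      apply mul_pos (by positivity); linarith
    rw [hd, div_eq_div_iff hp.ne' (by positivity)]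
    ring
  rw [hcongr]
  have : ∀ x : ℝ, (1 + Real.cos x) / (2 * k ^ 2) = (1 / (2 * k ^ 2)) * (1 + Real.cos x) := by
    intro x; ring
  simp only [this]
  rw [intervalIntegral.integral_const_mul]
  rw [intervalIntegral.integral_add intervalIntegrable_const (Real.continuous_cos.intervalIntegrable _ _)]
  simp [integral_cos]
  field_simp

/-- The angular integral arising in the two-dimensional ghost form
factor of the Refined Gribov–Zwanziger theory: for all `k, q > 0`,
`∫₀^{2π} (1 − cos²φ)/(k² + q² − 2kq·cos φ) dφ = π/(max k q)²`. -/
theorem angular_integral (k q : ℝ) (hk : 0 < k) (hq : 0 < q) :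
    ∫ φ in (0 : ℝ)..(2 * π),
        (1 - Real.cos φ ^ 2) / (k ^ 2 + q ^ 2 - 2 * k * q * Real.cos φ)
      = π / (max k q) ^ 2 := by
  rcases lt_trichotomy k q with h | h | h
  · have hsym : ∀ φ : ℝ, (1 - Real.cos φ ^ 2) / (k ^ 2 + q ^ 2 - 2 * k * q * Real.cos φ)
        = (1 - Real.cos φ ^ 2) / (q ^ 2 + k ^ 2 - 2 * q * k * Real.cos φ) := by
      intro φ; ring_nf
    simp only [hsym]
    rw [max_eq_right h.le]
    exact main_integral q k hk h
  · subst h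
    rw [max_self]
    exact eq_case k hk
  · rw [max_eq_left h.le]
    exact main_integral k q hq h
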